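/- Let p be an odd prime. For every x ∈ ℚ_p one has ‖x‖ ≤ 1 if and only if there exists y ∈ ℚ_p with y² = 1 + p·x². (Hence the valuation ring ℤ_p is defined in ℚ_p by the ring formula ∃y (y² = 1 + p x²).) -/

import Mathlib

theorem zp_defined_by_squares (p : ℕ) [Fact p.Prime] (hp : Odd p) (x : ℚ_[p]) :
    ‖x‖ ≤ 1 ↔ ∃ y : ℚ_[p], y ^ 2 = 1 + (p : ℚ_[p]) * x ^ 2 := by
  have hp1 : 1 < p := (Fact.out : p.Prime).one_lt
  constructor
  · intro hx
    set a : ℤ_[p] := ⟨x, hx⟩ with ha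
    set F : Polynomial ℤ_[p] := Polynomial.X ^ 2 - Polynomial.C (1 + p * a ^ 2) with hF
    have h2 : ‖(2 : ℤ_[p])‖ = 1 := by
      have : ¬ ‖((2 : ℤ) : ℤ_[p])‖ < 1 := by
        rw [PadicInt.norm_int_lt_one_iff_dvd]
        intro h
        have hle : (p : ℤ) ≤ 2 := Int.le_of_dvd (by norm_num) h
        have hp2 : p = 2 := by omega
        rw [hp2] at hp
        exact (by decide : ¬ Odd 2) hp
      push_cast at this
      have h1 := PadicInt.norm_le_one (2 : ℤ_[p])
      linarith [lt_or_eq_of_le h1]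
    have heval : F.eval 1 = -(p * a ^ 2) := by simp [hF]
    have hderiv : F.derivative = Polynomial.C 2 * Polynomial.X := by
      simp [hF, Polynomial.derivative_pow]
    have hderiv1 : F.derivative.eval 1 = 2 := by rw [hderiv]; simp
    have hnorm : ‖F.eval 1‖ < ‖F.derivative.eval 1‖ ^ 2 := by
      rw [heval, hderiv1, h2, one_pow, norm_neg]
      calc ‖(p : ℤ_[p]) * a ^ 2‖ ≤ ‖(p : ℤ_[p])‖ * 1 := by
              rw [norm_mul]
              gcongr
              exact PadicInt.norm_le_one _
        _ = (p : ℝ)⁻¹ := by rw [mul_one, PadicInt.norm_p]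
        _ < 1 := by
              rw [inv_lt_one_iff₀]
              right; exact_mod_cast hp1
    obtain ⟨z, hz, -⟩ := hensels_lemma hnorm
    refine ⟨(z : ℚ_[p]), ?_⟩
    have : z ^ 2 = 1 + p * a ^ 2 := by
      have := hz
      simp [hF, sub_eq_zero] at this
      exact this
    have := congrArg (PadicInt.Coe.ringHom (p := p)) this
    push_cast at this ⊢
    exact this
  · rintro ⟨y, hy⟩
    by_contra hx
    push_neg at hx
    have hxne : x ≠ 0 := by intro h; simp [h] at hx; linarith
    have hnorm1 : ‖(1 : ℚ_[p])‖ = 1 := norm_one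
    have hpx : ‖(p : ℚ_[p]) * x ^ 2‖ > 1 := by
      rw [norm_mul, norm_pow, Padic.norm_p]
      have hx2 : (p : ℝ) ≤ ‖x‖ := by
        rcases Padic.norm_eq_zpow_neg_valuation hxne ▸ hx with h
        -- norms are powers of p; ‖x‖ > 1 means ‖x‖ ≥ p
        rw [Padic.norm_eq_zpow_neg_valuation hxne] at hx ⊢
        have : (0:ℤ) < -x.valuation := by
          by_contra hc
          push_neg at hc
          have : ((p:ℝ)) ^ (-x.valuation) ≤ 1 :=
            zpow_le_one_of_nonpos₀ (by exact_mod_cast hp1.le) hc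
          linarith
        calc (p : ℝ) = (p:ℝ) ^ (1:ℤ) := (zpow_one _).symm
          _ ≤ (p:ℝ) ^ (-x.valuation) :=
            zpow_le_zpow_right₀ (by exact_mod_cast hp1.le) (by omega)
      have hppos : (0:ℝ) < p := by positivity
      calc (1:ℝ) < (p:ℝ)⁻¹ * (p * p) := by
              rw [inv_mul_eq_div]
              rw [lt_div_iff₀ hppos]
              nlinarith [(by exact_mod_cast hp1 : (1:ℝ) < p)]
        _ ≤ (p:ℝ)⁻¹ * (‖x‖ * ‖x‖) := by
              have h0 : (0:ℝ) ≤ p := by positivity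
              gcongr
        _ = (p:ℝ)⁻¹ * ‖x‖ ^ 2 := by ring
    have hyy : ‖y ^ 2‖ = ‖(p : ℚ_[p]) * x ^ 2‖ := by
      rw [hy, Padic.add_eq_max_of_ne (by rw [hnorm1]; linarith)]
      rw [hnorm1]
      exact max_eq_right (le_of_lt hpx)
    have hgt : ‖y ^ 2‖ > 1 := by rw [hyy]; exact hpx
    have hyne : y ≠ 0 := by
      intro h; rw [h] at hgt; simp at hgt; linarith
    -- valuation parity contradiction
    have hv : (y ^ 2).valuation = ((p : ℚ_[p]) * x ^ 2).valuation := by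
      have h1 := Padic.norm_eq_zpow_neg_valuation (p := p) (x := y ^ 2) (pow_ne_zero _ hyne)
      have h2 := Padic.norm_eq_zpow_neg_valuation (p := p) (x := (p : ℚ_[p]) * x ^ 2)
        (mul_ne_zero (by exact_mod_cast (Fact.out : p.Prime).ne_zero) (pow_ne_zero _ hxne))
      rw [h1, h2] at hyy
      have := zpow_right_injective₀ (by positivity) (by
        exact_mod_cast hp1.ne' : (p:ℝ) ≠ 1) hyy
      omega
    have hvy : (y ^ 2).valuation = 2 * y.valuation := by
      rw [sq, Padic.valuation_mul hyne hyne]; ring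
    have hvx : ((p : ℚ_[p]) * x ^ 2).valuation = 1 + 2 * x.valuation := by
      rw [Padic.valuation_mul (by exact_mod_cast (Fact.out : p.Prime).ne_zero)
        (pow_ne_zero _ hxne), sq, Padic.valuation_mul hxne hxne, Padic.valuation_p]
      ring
    omega
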